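/- arXiv:2401.01393 — 3 statements merged into one kernel-verified Lean document; each statement's English description precedes it below -/
import Mathlib

section
/- Let f be a holomorphic function on an open set U ⊆ ℂ, let a ∈ U be a simple zero of f (i.e., f(a) = 0 and f′(a) ≠ 0), and let z : [0, ∞) → U be a differentiable curve satisfying dz/dt = −f(z(t))/f′(z(t)) for all t (with f′(z(t)) ≠ 0 for all t) and z(t) → a as t → ∞. Then there exist constants C > 0 and t₀ ≥ 0 such that |z(t) − a| ≤ C·e^{−t} for all t ≥ t₀; that is, |z(t) − a| = O(e^{−t}) as t → ∞. -/
open Filter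

/-- If `a` is a simple zero of a holomorphic function `f` on an open set `U ⊆ ℂ`, and
`z : [0, ∞) → U` solves the Newton flow `dz/dt = −f(z(t))/f′(z(t))` with `z(t) → a`
as `t → ∞`, then `|z(t) − a| = O(e^{−t})`: there are `C > 0` and `t₀ ≥ 0` with
`|z(t) − a| ≤ C·e^{−t}` for all `t ≥ t₀`. -/
theorem newton_flow_rate_to_simple_zero
    (U : Set ℂ) (hU : IsOpen U) (f : ℂ → ℂ) (hf : DifferentiableOn ℂ f U)
    (a : ℂ) (ha : a ∈ U) (hfa : f a = 0) (hfa' : deriv f a ≠ 0)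
    (z : ℝ → ℂ) (hmem : ∀ t : ℝ, 0 ≤ t → z t ∈ U)
    (hne : ∀ t : ℝ, 0 ≤ t → deriv f (z t) ≠ 0)
    (hode : ∀ t : ℝ, 0 ≤ t →
      HasDerivWithinAt z (-(f (z t) / deriv f (z t))) (Set.Ici 0) t)
    (hlim : Tendsto z atTop (nhds a)) :
    ∃ C : ℝ, 0 < C ∧ ∃ t₀ : ℝ, 0 ≤ t₀ ∧
      ∀ t : ℝ, t₀ ≤ t → ‖z t - a‖ ≤ C * Real.exp (-t) := by
  have hA : 0 < ‖deriv f a‖ := by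
    simpa [norm_pos_iff] using hfa'
  set c : ℝ := 2 / ‖deriv f a‖ with hc
  have hcpos : 0 < c := by positivity
  -- derivative of g(t) = f(z(t)) * exp(t) is zero on [0,∞)
  have hg : ∀ t : ℝ, 0 ≤ t →
      HasDerivWithinAt (fun s : ℝ => f (z s) * Complex.exp s) 0 (Set.Ici 0) t := by
    intro t ht
    have hfd : HasDerivAt f (deriv f (z t)) (z t) :=
      (hf.differentiableAt (hU.mem_nhds (hmem t ht))).hasDerivAt
    have h1 : HasDerivWithinAt (fun s => f (z s)) (-(f (z t))) (Set.Ici 0) t := by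
      have h := hfd.comp_hasDerivWithinAt t (hode t ht)
      exact h.congr_deriv (by rw [mul_neg, mul_div_cancel₀ _ (hne t ht)])
    have h2 : HasDerivWithinAt (fun s : ℝ => Complex.exp s) (Complex.exp t) (Set.Ici 0) t :=
      ((Complex.hasDerivAt_exp (t : ℂ)).comp_ofReal).hasDerivWithinAt
    have h3 := h1.mul h2
    exact h3.congr_deriv (by ring)
  -- hence g is constant on [0,∞)
  have heq : ∀ t : ℝ, 0 ≤ t → f (z t) * Complex.exp t = f (z 0) := by
    intro t ht
    have hcont : ContinuousOn (fun s : ℝ => f (z s) * Complex.exp s) (Set.Icc 0 t) :=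
      fun x hx => ((hg x hx.1).continuousWithinAt).mono (fun y hy => hy.1)
    have := constant_of_has_deriv_right_zero hcont
      (fun x hx => (hg x hx.1).mono (Set.Ici_subset_Ici.2 hx.1))
      t (Set.mem_Icc.2 ⟨ht, le_refl t⟩)
    simpa using this
  -- so |f(z(t))| = |f(z(0))| * exp(-t)
  have habs : ∀ t : ℝ, 0 ≤ t →
      ‖f (z t)‖ = ‖f (z 0)‖ * Real.exp (-t) := by
    intro t ht
    have h := congrArg (fun w : ℂ => ‖w‖) (heq t ht)
    rw [norm_mul, Complex.norm_exp, Complex.ofReal_re] at h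
    rw [Real.exp_neg, ← h]
    field_simp
  -- near a, |w - a| ≤ c * |f w|
  have hd0 : HasDerivAt f (deriv f a) a :=
    (hf.differentiableAt (hU.mem_nhds ha)).hasDerivAt
  have hslope : Tendsto (slope f a) (nhdsWithin a {a}ᶜ) (nhds (deriv f a)) :=
    hasDerivAt_iff_tendsto_slope.1 hd0
  have habs_slope : Tendsto (fun w => ‖slope f a w‖) (nhdsWithin a {a}ᶜ)
      (nhds (‖deriv f a‖)) :=
    hslope.norm
  have h3 : ∀ᶠ w in nhdsWithin a {a}ᶜ,
      ‖deriv f a‖ / 2 < ‖slope f a w‖ :=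
    habs_slope.eventually (eventually_gt_nhds (by linarith))
  have h4 : ∀ᶠ w in nhds a, ‖w - a‖ ≤ c * ‖f w‖ := by
    rw [eventually_nhdsWithin_iff] at h3
    filter_upwards [h3] with w hw
    by_cases hwa : w = a
    · simp [hwa, hfa]
    · have h5 := hw hwa
      rw [slope_def_field, hfa, sub_zero, norm_div] at h5
      have hr : 0 < ‖w - a‖ := by
        simpa [sub_eq_zero, norm_pos_iff] using hwa
      rw [div_lt_div_iff₀ (by linarith) hr] at h5
      rw [hc, div_mul_eq_mul_div, le_div_iff₀ hA]
      nlinarith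
  have h6 : ∀ᶠ t in atTop, ‖z t - a‖ ≤ c * ‖f (z t)‖ :=
    hlim.eventually h4
  obtain ⟨T, hT⟩ := eventually_atTop.1 h6
  refine ⟨c * ‖f (z 0)‖ + 1, by positivity, max T 0, le_max_right _ _, ?_⟩
  intro t hts
  have ht0 : 0 ≤ t := le_trans (le_max_right T 0) hts
  calc ‖z t - a‖ ≤ c * ‖f (z t)‖ :=
        hT t (le_trans (le_max_left T 0) hts)
    _ = c * (‖f (z 0)‖ * Real.exp (-t)) := by rw [habs t ht0]
    _ ≤ (c * ‖f (z 0)‖ + 1) * Real.exp (-t) := by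
        nlinarith [Real.exp_pos (-t)]
end

section
/- Let f be a holomorphic function defined on a neighborhood of 0 in ℂ with f(0) = 0 and f′(0) ≠ 0, and define F(x, y) = |f(x + iy)|²/2. Then the Hessian ∇²F(z) is invertible for all z in some neighborhood of 0, and the Newton-flow vector field satisfies (∇²F(z))⁻¹ ∇F(z) = z + o(|z|) as z → 0; that is, the map z ↦ (∇²F(z))⁻¹ ∇F(z) − z is little-o of |z| as z → 0 (identifying ℝ² with ℂ). -/
open Filter Asymptotics

lemma grad_formula {f : ℂ → ℂ} {z a : ℂ} (hf : HasDerivAt f a z) :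
    HasGradientAt (fun w => ‖f w‖ ^ 2 / 2) ((starRingEnd ℂ) a * f z) z := by
  rw [hasGradientAt_iff_hasFDerivAt]
  have hF : HasFDerivAt f ((ContinuousLinearMap.smulRight (1 : ℂ →L[ℂ] ℂ) a).restrictScalars ℝ) z :=
    (hf.hasFDerivAt).restrictScalars ℝ
  have hinner := hF.inner ℝ hF
  have hfun : (fun w => ‖f w‖ ^ 2 / 2) = fun w => (inner ℝ (f w) (f w) : ℝ) * 2⁻¹ := by
    funext w
    rw [real_inner_self_eq_norm_sq, div_eq_mul_inv]
  rw [hfun]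
  have h2 := hinner.mul_const (2⁻¹ : ℝ)
  convert h2 using 1
  · rfl
  ext v
  simp only [InnerProductSpace.toDual_apply_apply, ContinuousLinearMap.coe_smul', Pi.smul_apply,
    ContinuousLinearMap.coe_comp', Function.comp_apply, ContinuousLinearMap.prod_apply,
    ContinuousLinearMap.coe_restrictScalars', ContinuousLinearMap.smulRight_apply,
    ContinuousLinearMap.one_apply, fderivInnerCLM_apply, smul_eq_mul]
  rw [real_inner_eq_re_inner ℂ, real_inner_eq_re_inner ℂ, real_inner_eq_re_inner ℂ,
    RCLike.inner_apply, RCLike.inner_apply, RCLike.inner_apply]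
  simp only [RCLike.re_to_complex, map_mul, Complex.conj_conj, Complex.mul_re, Complex.mul_im,
    Complex.conj_re, Complex.conj_im]
  ring

lemma hess_formula {f : ℂ → ℂ} {z : ℂ} (h1 : HasDerivAt f (deriv f z) z)
    (h2 : HasDerivAt (deriv f) (deriv (deriv f) z) z) :
    HasFDerivAt (fun w => (starRingEnd ℂ) (deriv f w) * f w)
      ((ContinuousLinearMap.mul ℝ ℂ) ((starRingEnd ℂ) (deriv f z) * deriv f z) +
        ((ContinuousLinearMap.mul ℝ ℂ) (f z * (starRingEnd ℂ) (deriv (deriv f) z))).comp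
          (Complex.conjCLE : ℂ ≃L[ℝ] ℂ).toContinuousLinearMap) z := by
  have hc : HasFDerivAt (fun w => (starRingEnd ℂ) (deriv f w))
      (((Complex.conjCLE : ℂ ≃L[ℝ] ℂ).toContinuousLinearMap).comp
        ((ContinuousLinearMap.smulRight (1 : ℂ →L[ℂ] ℂ) (deriv (deriv f) z)).restrictScalars ℝ)) z := by
    have := ((Complex.conjCLE : ℂ ≃L[ℝ] ℂ).toContinuousLinearMap.hasFDerivAt).comp z
      ((h2.hasFDerivAt).restrictScalars ℝ)
    exact this
  have hd : HasFDerivAt f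
      ((ContinuousLinearMap.smulRight (1 : ℂ →L[ℂ] ℂ) (deriv f z)).restrictScalars ℝ) z :=
    (h1.hasFDerivAt).restrictScalars ℝ
  have hmul := hc.mul hd
  refine hmul.congr_fderiv ?_
  ext v
  simp only [ContinuousLinearMap.add_apply, ContinuousLinearMap.mul_apply',
    ContinuousLinearMap.coe_comp', Function.comp_apply, ContinuousLinearEquiv.coe_coe,
    Complex.conjCLE_apply, ContinuousLinearMap.coe_smul', Pi.smul_apply,
    ContinuousLinearMap.coe_restrictScalars', ContinuousLinearMap.smulRight_apply,
    ContinuousLinearMap.one_apply, smul_eq_mul, map_mul]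
  ring

/-- If `f` is holomorphic near `0 ∈ ℂ` with `f(0) = 0` and `f′(0) ≠ 0`, and
`F(z) = |f(z)|²/2` on `ℝ² ≅ ℂ`, then the Hessian `∇²F(z) = fderiv ℝ (gradient F) z`
is invertible for all `z` near `0`, and the Newton-flow vector field satisfies
`(∇²F(z))⁻¹ ∇F(z) = z + o(|z|)` as `z → 0`. -/
theorem newton_flow_optimization_vector_field_near_simple_zero
    (f : ℂ → ℂ) (U : Set ℂ) (hU : IsOpen U) (h0 : (0 : ℂ) ∈ U)
    (hf : DifferentiableOn ℂ f U) (hf0 : f 0 = 0) (hf'0 : deriv f 0 ≠ 0) :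
    (∀ᶠ z in nhds (0 : ℂ),
      IsUnit (fderiv ℝ (gradient (fun w => ‖f w‖ ^ 2 / 2)) z)) ∧
    (fun z : ℂ =>
        Ring.inverse (fderiv ℝ (gradient (fun w => ‖f w‖ ^ 2 / 2)) z)
          (gradient (fun w => ‖f w‖ ^ 2 / 2) z) - z)
      =o[nhds (0 : ℂ)] fun z => z := by
  have han : AnalyticOnNhd ℂ f U := hf.analyticOnNhd hU
  have hd1 : AnalyticOnNhd ℂ (deriv f) U := han.deriv
  have hd2 : AnalyticOnNhd ℂ (deriv (deriv f)) U := hd1.deriv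
  set F : ℂ → ℝ := fun w => ‖f w‖ ^ 2 / 2 with hFdef
  set Φ : ℂ → (ℂ →L[ℝ] ℂ) := fun z =>
    (ContinuousLinearMap.mul ℝ ℂ) ((starRingEnd ℂ) (deriv f z) * deriv f z) +
      ((ContinuousLinearMap.mul ℝ ℂ) (f z * (starRingEnd ℂ) (deriv (deriv f) z))).comp
        (Complex.conjCLE : ℂ ≃L[ℝ] ℂ).toContinuousLinearMap with hΦdef
  set g : ℂ → ℂ := fun z => (starRingEnd ℂ) (deriv f z) * f z with hgdef
  have hΦapp : ∀ z v : ℂ, Φ z v = (starRingEnd ℂ) (deriv f z) * deriv f z * v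
      + f z * (starRingEnd ℂ) (deriv (deriv f) z) * (starRingEnd ℂ) v := by
    intro z v
    simp [hΦdef, ContinuousLinearMap.mul_apply', Complex.conjCLE_apply]
  have hder : ∀ z ∈ U, HasDerivAt f (deriv f z) z :=
    fun z hz => ((han z hz).differentiableAt).hasDerivAt
  have hder1 : ∀ z ∈ U, HasDerivAt (deriv f) (deriv (deriv f) z) z :=
    fun z hz => ((hd1 z hz).differentiableAt).hasDerivAt
  have hgrad : ∀ z ∈ U, gradient F z = g z :=
    fun z hz => (grad_formula (hder z hz)).gradient
  have hhess : ∀ z ∈ U, fderiv ℝ (gradient F) z = Φ z := by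
    intro z hz
    have heq : gradient F =ᶠ[nhds z] (fun w => (starRingEnd ℂ) (deriv f w) * f w) := by
      filter_upwards [hU.mem_nhds hz] with w hw using hgrad w hw
    rw [heq.fderiv_eq]
    exact (hess_formula (hder z hz) (hder1 z hz)).fderiv
  have hc0 : ContinuousAt f 0 := ((han 0 h0).differentiableAt).continuousAt
  have hc1 : ContinuousAt (deriv f) 0 := ((hd1 0 h0).differentiableAt).continuousAt
  have hc2 : ContinuousAt (deriv (deriv f)) 0 := ((hd2 0 h0).differentiableAt).continuousAt
  have hc1' : ContinuousAt (fun z => (starRingEnd ℂ) (deriv f z)) 0 :=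
    Complex.continuous_conj.continuousAt.comp hc1
  have hΦc : ContinuousAt Φ 0 := by
    apply ContinuousAt.add
    · exact (ContinuousLinearMap.mul ℝ ℂ).continuous.continuousAt.comp (hc1'.mul hc1)
    · have hcont : ContinuousAt
          (fun z => (ContinuousLinearMap.mul ℝ ℂ) (f z * (starRingEnd ℂ) (deriv (deriv f) z))) 0 :=
        (ContinuousLinearMap.mul ℝ ℂ).continuous.continuousAt.comp
          (hc0.mul (Complex.continuous_conj.continuousAt.comp hc2))
      exact ((((ContinuousLinearMap.compL ℝ ℂ ℂ ℂ).flip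
        (Complex.conjCLE : ℂ ≃L[ℝ] ℂ).toContinuousLinearMap).continuous.continuousAt).comp hcont :)
  have hΦ0 : Φ 0 = (ContinuousLinearMap.mul ℝ ℂ) ((starRingEnd ℂ) (deriv f 0) * deriv f 0) := by
    ext v
    simp [hΦapp, hf0]
  have hr : (starRingEnd ℂ) (deriv f 0) * deriv f 0 ≠ 0 :=
    mul_ne_zero (by simpa using hf'0) hf'0
  have hunit0 : IsUnit (Φ 0) := by
    refine isUnit_iff_exists.mpr
      ⟨(ContinuousLinearMap.mul ℝ ℂ) ((starRingEnd ℂ) (deriv f 0) * deriv f 0)⁻¹, ?_, ?_⟩ <;>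
    · rw [hΦ0]
      ext v
      simp only [ContinuousLinearMap.mul_apply, ContinuousLinearMap.mul_apply',
        ContinuousLinearMap.one_apply]
      rw [← mul_assoc]
      first
      | rw [mul_inv_cancel₀ hr, one_mul]
      | rw [inv_mul_cancel₀ hr, one_mul]
  have hUnhds : U ∈ nhds (0 : ℂ) := hU.mem_nhds h0
  have hflt : ∀ᶠ z in nhds (0 : ℂ), fderiv ℝ (gradient F) z = Φ z := by
    filter_upwards [hUnhds] with z hz using hhess z hz
  have hglt : ∀ᶠ z in nhds (0 : ℂ), gradient F z = g z := by
    filter_upwards [hUnhds] with z hz using hgrad z hz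
  have hev_unit : ∀ᶠ z in nhds (0 : ℂ), IsUnit (Φ z) :=
    hΦc.eventually_mem (Units.isOpen.mem_nhds hunit0)
  constructor
  · filter_upwards [hflt, hev_unit] with z h1 h2
    rw [h1]; exact h2
  -- little-o part
  have e1 : (fun z : ℂ => f z - deriv f 0 * z) =o[nhds 0] fun z => z := by
    have h := (hder 0 h0)
    rw [hasDerivAt_iff_isLittleO] at h
    simpa [hf0, smul_eq_mul, mul_comm] using h
  have e2 : (fun z : ℂ => (deriv f z - deriv f 0) * z) =o[nhds 0] fun z => z := by
    have ht : Tendsto (fun z : ℂ => deriv f z - deriv f 0) (nhds 0) (nhds 0) := by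
      simpa using hc1.tendsto.sub_const (deriv f 0)
    have h1 : (fun z : ℂ => deriv f z - deriv f 0) =o[nhds 0] (fun _ => (1 : ℂ)) :=
      (isLittleO_one_iff ℂ).mpr ht
    simpa using h1.mul_isBigO (isBigO_refl (fun z : ℂ => z) (nhds 0))
  have ha : (fun z : ℂ => f z - deriv f z * z) =o[nhds 0] fun z => z := by
    have h := e1.sub e2
    exact h.congr_left fun z => by ring
  have hbO : (fun z : ℂ => (starRingEnd ℂ) (deriv f z)) =O[nhds 0] (fun _ => (1 : ℂ)) :=
    hc1'.tendsto.isBigO_one ℂ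
  have term1 : (fun z : ℂ => (starRingEnd ℂ) (deriv f z) * (f z - deriv f z * z))
      =o[nhds 0] fun z => z := by
    simpa using hbO.mul_isLittleO ha
  have term2 : (fun z : ℂ => f z * (starRingEnd ℂ) (deriv (deriv f) z) * (starRingEnd ℂ) z)
      =o[nhds 0] fun z => z := by
    have ht : Tendsto (fun z : ℂ => f z * (starRingEnd ℂ) (deriv (deriv f) z)) (nhds 0)
        (nhds 0) := by
      have := hc0.tendsto.mul (Complex.continuous_conj.continuousAt.comp hc2).tendsto
      simpa [hf0] using this
    have h1 : (fun z : ℂ => f z * (starRingEnd ℂ) (deriv (deriv f) z))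
        =o[nhds 0] (fun _ => (1 : ℂ)) := (isLittleO_one_iff ℂ).mpr ht
    have h2 : (fun z : ℂ => (starRingEnd ℂ) z) =O[nhds 0] fun z => z := by
      apply isBigO_of_le
      intro z
      simp [RCLike.norm_conj]
    simpa using h1.mul_isBigO h2
  have hu : (fun z : ℂ => g z - Φ z z) =o[nhds 0] fun z => z := by
    have h := term1.sub term2
    refine h.congr_left fun z => ?_
    rw [hΦapp, hgdef]
    ring
  have hinvc : ContinuousAt (fun z => Ring.inverse (Φ z)) 0 := by
    have := NormedRing.inverse_continuousAt hunit0.unit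
    rw [IsUnit.unit_spec] at this
    exact this.comp hΦc
  have hnorm : Tendsto (fun z => ‖Ring.inverse (Φ z)‖) (nhds (0 : ℂ))
      (nhds ‖Ring.inverse (Φ 0)‖) := hinvc.norm
  have hC : ∀ᶠ z in nhds (0 : ℂ), ‖Ring.inverse (Φ z)‖ ≤ ‖Ring.inverse (Φ 0)‖ + 1 := by
    filter_upwards [hnorm.eventually_lt_const (lt_add_one _)] with z h using le_of_lt h
  have hbig : (fun z : ℂ => Ring.inverse (Φ z) (g z - Φ z z)) =O[nhds 0]
      fun z => g z - Φ z z := by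
    apply IsBigO.of_bound (‖Ring.inverse (Φ 0)‖ + 1)
    filter_upwards [hC] with z h
    calc ‖Ring.inverse (Φ z) (g z - Φ z z)‖
        ≤ ‖Ring.inverse (Φ z)‖ * ‖g z - Φ z z‖ := ContinuousLinearMap.le_opNorm _ _
      _ ≤ (‖Ring.inverse (Φ 0)‖ + 1) * ‖g z - Φ z z‖ :=
          mul_le_mul_of_nonneg_right h (norm_nonneg _)
  have hv : (fun z : ℂ => Ring.inverse (Φ z) (g z) - z) =o[nhds 0] fun z => z := by
    have h1 : (fun z : ℂ => Ring.inverse (Φ z) (g z - Φ z z)) =o[nhds 0] fun z => z :=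
      hbig.trans_isLittleO hu
    refine h1.congr' ?_ EventuallyEq.rfl
    filter_upwards [hev_unit] with z hz
    have hcan : Ring.inverse (Φ z) (Φ z z) = z := by
      have hmc := Ring.inverse_mul_cancel (Φ z) hz
      calc Ring.inverse (Φ z) (Φ z z) = (Ring.inverse (Φ z) * Φ z) z :=
            (ContinuousLinearMap.mul_apply _ _ _).symm
        _ = z := by rw [hmc]; rfl
    rw [map_sub, hcan]
  refine hv.congr' ?_ EventuallyEq.rfl
  filter_upwards [hflt, hglt] with z h1 h2
  rw [h1, h2]
end

section
/- Let f be a holomorphic function defined on a neighborhood of a point a ∈ ℂ with f(a) = 0 and f′(a) ≠ 0, and define F(x, y) = |f(x + iy)|²/2. Then there exists a neighborhood V of a such that for every initial point z₀ ∈ V, the ordinary differential equation dz/dt = −(∇²F(z))⁻¹ ∇F(z), z(0) = z₀, has a solution z : [0, ∞) → ℂ defined for all t ≥ 0 (with ∇²F(z(t)) invertible for all t), and z(t) → a as t → ∞. -/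
open Filter

/-- If `f` is holomorphic near a simple zero `a` (`f(a) = 0`, `f′(a) ≠ 0`) and
`F(z) = |f(z)|²/2` on `ℝ² ≅ ℂ`, then there is a neighborhood `V` of `a` such that for
every `z₀ ∈ V` the Newton flow for optimization `dz/dt = −(∇²F(z))⁻¹ ∇F(z)`,
`z(0) = z₀`, has a global solution on `[0, ∞)` (with invertible Hessian along it)
converging to `a` as `t → ∞`. Here the Hessian is `fderiv ℝ (gradient F)`. -/
theorem newton_flow_optimization_local_convergence
    (f : ℂ → ℂ) (U : Set ℂ) (hU : IsOpen U) (a : ℂ) (ha : a ∈ U)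
    (hf : DifferentiableOn ℂ f U) (hfa : f a = 0) (hfa' : deriv f a ≠ 0) :
    ∃ V ∈ nhds a, ∀ z₀ ∈ V, ∃ z : ℝ → ℂ,
      z 0 = z₀ ∧
      (∀ t : ℝ, 0 ≤ t →
        IsUnit (fderiv ℝ (gradient (fun w => ‖f w‖ ^ 2 / 2)) (z t)) ∧
        HasDerivWithinAt z
          (-(Ring.inverse (fderiv ℝ (gradient (fun w => ‖f w‖ ^ 2 / 2)) (z t))
              (gradient (fun w => ‖f w‖ ^ 2 / 2) (z t))))
          (Set.Ici 0) t) ∧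
      Tendsto z atTop (nhds a) := by

  set F₀ : ℂ → ℝ := fun w => ‖f w‖ ^ 2 / 2 with hF₀_def
  set g : ℂ → ℂ := fun w => f w * (starRingEnd ℂ) (deriv f w) with hg_def
  have hA : AnalyticOnNhd ℂ f U := hf.analyticOnNhd hU
  have hA1 : AnalyticOnNhd ℂ (deriv f) U := hA.deriv
  -- the gradient of F₀ is g on U
  have hgrad : ∀ w ∈ U, HasGradientAt F₀ (g w) w := by
    intro w hw
    have h1 : HasDerivAt f (deriv f w) w := (hf.differentiableAt (hU.mem_nhds hw)).hasDerivAt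
    have hD : HasFDerivAt f
        ((ContinuousLinearMap.smulRight (1 : ℂ →L[ℂ] ℂ) (deriv f w)).restrictScalars ℝ) w :=
      h1.hasFDerivAt.restrictScalars ℝ
    have h2 := (hD.inner ℝ hD).const_smul (2⁻¹ : ℝ)
    have hfun : F₀ = fun t => (2⁻¹ : ℝ) • (inner ℝ (f t) (f t) : ℝ) := by
      funext t
      rw [hF₀_def, real_inner_self_eq_norm_sq, smul_eq_mul]
      ring
    rw [hasGradientAt_iff_hasFDerivAt, hfun]
    refine h2.congr_fderiv ?_
    ext h
    simp only [InnerProductSpace.toDual_apply_apply, ContinuousLinearMap.coe_smul', Pi.smul_apply,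
      ContinuousLinearMap.coe_comp', Function.comp_apply, ContinuousLinearMap.prod_apply,
      ContinuousLinearMap.coe_restrictScalars', ContinuousLinearMap.smulRight_apply,
      ContinuousLinearMap.one_apply, fderivInnerCLM_apply, smul_eq_mul]
    simp only [Complex.inner, Complex.mul_re, Complex.conj_re, Complex.conj_im, smul_eq_mul,
      Complex.mul_im, Complex.smul_re, Complex.smul_im]
    simp only [hg_def, Complex.mul_re, Complex.mul_im, Complex.conj_re, Complex.conj_im]
    ring
  have hgrad_eq : ∀ w ∈ U, gradient F₀ w = g w := fun w hw => (hgrad w hw).gradient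
  have hfderiv_eq : ∀ w ∈ U, fderiv ℝ (gradient F₀) w = fderiv ℝ g w := by
    intro w hw
    apply Filter.EventuallyEq.fderiv_eq
    exact Filter.eventuallyEq_of_mem (hU.mem_nhds hw) hgrad_eq
  -- analyticity of g
  have hgan : AnalyticOnNhd ℝ g U := by
    apply (hA.restrictScalars).mul
    exact fun x hx => ((Complex.conjCLE : ℂ →L[ℝ] ℂ).analyticAt _).comp
      ((hA1 x hx).restrictScalars)
  have hgdiff : ∀ w ∈ U, HasFDerivAt g (fderiv ℝ g w) w :=
    fun w hw => (hgan w hw).differentiableAt.hasFDerivAt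
  -- derivative of g at a
  have hL : HasFDerivAt g
      ((‖deriv f a‖ ^ 2 : ℝ) • (ContinuousLinearMap.id ℝ ℂ)) a := by
    have h1 : HasFDerivAt f
        ((ContinuousLinearMap.smulRight (1 : ℂ →L[ℂ] ℂ) (deriv f a)).restrictScalars ℝ) a :=
      ((hA a ha).differentiableAt.hasDerivAt).hasFDerivAt.restrictScalars ℝ
    have h2 : HasFDerivAt (fun w => (starRingEnd ℂ) (deriv f w))
        ((Complex.conjCLE : ℂ →L[ℝ] ℂ).comp
          ((ContinuousLinearMap.smulRight (1 : ℂ →L[ℂ] ℂ)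
            (deriv (deriv f) a)).restrictScalars ℝ)) a :=
      (Complex.conjCLE : ℂ →L[ℝ] ℂ).hasFDerivAt.comp a
        (((hA1 a ha).differentiableAt.hasDerivAt).hasFDerivAt.restrictScalars ℝ)
    have h3 := h1.mul' h2
    refine h3.congr_fderiv ?_
    ext h
    simp [hfa, Complex.ext_iff, Complex.mul_re, Complex.mul_im, Complex.sq_norm,
      Complex.normSq_apply]
    constructor <;> ring
  -- fderiv g a is a unit
  have hLunit : IsUnit (fderiv ℝ g a) := by
    rw [hL.fderiv]
    rw [isUnit_iff_exists]
    refine ⟨((‖deriv f a‖ ^ 2 : ℝ))⁻¹ • (ContinuousLinearMap.id ℝ ℂ), ?_, ?_⟩ <;>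
    · ext x
      have : ‖deriv f a‖ ^ 2 ≠ 0 := by
        simpa using hfa'
      simp [ContinuousLinearMap.mul_apply, smul_smul, inv_mul_cancel₀ this,
        mul_inv_cancel₀ this]
  -- strict derivative at a, as a continuous linear equiv
  have hcd : ContDiffAt ℝ 1 g a := ((hgan a ha).contDiffAt).of_le le_top
  have hstrict : HasStrictFDerivAt g (fderiv ℝ g a) a := hcd.hasStrictFDerivAt one_ne_zero
  set E₀ : ℂ ≃L[ℝ] ℂ := ContinuousLinearEquiv.unitsEquiv ℝ ℂ hLunit.unit with hE₀_def
  have hE₀ : (E₀ : ℂ →L[ℝ] ℂ) = fderiv ℝ g a := by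
    ext x
    rw [hE₀_def]
    rw [ContinuousLinearEquiv.coe_coe, ContinuousLinearEquiv.unitsEquiv_apply, hLunit.unit_spec]
  have hstrict' : HasStrictFDerivAt g (E₀ : ℂ →L[ℝ] ℂ) a := hE₀ ▸ hstrict
  set Φ := hstrict'.toOpenPartialHomeomorph g with hΦ_def
  have hΦcoe : (Φ : ℂ → ℂ) = g := hstrict'.toOpenPartialHomeomorph_coe
  have haΦ : a ∈ Φ.source := hstrict'.mem_toOpenPartialHomeomorph_source
  have hga : g a = 0 := by simp [hg_def, hfa]
  have h0t : (0 : ℂ) ∈ Φ.target := by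
    have := hstrict'.image_mem_toOpenPartialHomeomorph_target
    rwa [hga] at this
  have hψ0 : Φ.symm 0 = a := by
    rw [← hga, ← hΦcoe]
    exact Φ.left_inv haΦ
  -- the good open set W
  set S : Set ℂ := U ∩ (fderiv ℝ g) ⁻¹' {x | IsUnit x} with hS_def
  have hSopen : IsOpen S := (hgan.fderiv.continuousOn).isOpen_inter_preimage hU Units.isOpen
  set W := Φ.source ∩ S with hW_def
  have hWopen : IsOpen W := Φ.open_source.inter hSopen
  have haW : a ∈ W := ⟨haΦ, ha, hLunit⟩
  -- choose ε
  have hψc0 : ContinuousAt Φ.symm 0 := Φ.symm.continuousAt (by simpa using h0t)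
  have hWnhds : W ∈ nhds (Φ.symm 0) := by rw [hψ0]; exact hWopen.mem_nhds haW
  have hmem : Φ.target ∩ Φ.symm ⁻¹' W ∈ nhds 0 :=
    Filter.inter_mem (Φ.open_target.mem_nhds h0t) (hψc0.preimage_mem_nhds hWnhds)
  obtain ⟨ε, hε, hball⟩ := Metric.mem_nhds_iff.mp hmem
  -- the neighborhood V
  refine ⟨W ∩ g ⁻¹' Metric.ball 0 ε, ?_, ?_⟩
  · exact Filter.inter_mem (hWopen.mem_nhds haW)
      (((hgan a ha).continuousAt).preimage_mem_nhds
        (by rw [hga]; exact Metric.ball_mem_nhds 0 hε))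
  intro z₀ hz₀
  obtain ⟨hz₀W, hz₀ball⟩ := hz₀
  set c : ℂ := g z₀ with hc_def
  have hcnorm : ‖c‖ < ε := by simpa [mem_ball_zero_iff] using hz₀ball
  set u : ℝ → ℂ := fun t => Real.exp (-t) • c with hu_def
  set z : ℝ → ℂ := fun t => Φ.symm (u t) with hz_def
  -- membership facts
  have huball : ∀ t : ℝ, 0 ≤ t → u t ∈ Metric.ball (0 : ℂ) ε := by
    intro t ht
    rw [mem_ball_zero_iff, hu_def]
    calc ‖Real.exp (-t) • c‖ = Real.exp (-t) * ‖c‖ := by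
          rw [norm_smul, Real.norm_eq_abs, abs_of_pos (Real.exp_pos _)]
      _ ≤ 1 * ‖c‖ := by
          apply mul_le_mul_of_nonneg_right _ (norm_nonneg c)
          exact Real.exp_le_one_iff.mpr (neg_nonpos.mpr ht)
      _ < ε := by rwa [one_mul]
  have hrightinv : ∀ y ∈ Metric.ball (0 : ℂ) ε, g (Φ.symm y) = y := by
    intro y hy
    rw [← hΦcoe]
    exact Φ.right_inv (hball hy).1
  have hzW : ∀ t : ℝ, 0 ≤ t → z t ∈ W := fun t ht => (hball (huball t ht)).2
  refine ⟨z, ?_, ?_, ?_⟩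
  · -- z 0 = z₀
    rw [hz_def]
    simp only [hu_def]
    rw [neg_zero, Real.exp_zero, one_smul, hc_def, ← hΦcoe]
    exact Φ.left_inv hz₀W.1
  · -- the ODE
    intro t ht
    have hzU : z t ∈ U := (hzW t ht).2.1
    have hunit : IsUnit (fderiv ℝ g (z t)) := (hzW t ht).2.2
    have hgradzt : gradient F₀ (z t) = g (z t) := hgrad_eq _ hzU
    have hfdzt : fderiv ℝ (gradient F₀) (z t) = fderiv ℝ g (z t) := hfderiv_eq _ hzU
    have hgzt : g (z t) = u t := hrightinv _ (huball t ht)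
    refine ⟨by rw [hfdzt]; exact hunit, ?_⟩
    -- derivative of u
    have hu' : HasDerivAt u (-Real.exp (-t) • c) t := by
      have h1 : HasDerivAt (fun s : ℝ => Real.exp (-s)) (-Real.exp (-t)) t := by
        simpa using (hasDerivAt_neg t).exp
      exact h1.smul_const c
    -- derivative of Φ.symm at u t
    set eqv : ℂ ≃L[ℝ] ℂ := ContinuousLinearEquiv.unitsEquiv ℝ ℂ hunit.unit with heqv_def
    have heqv : (eqv : ℂ →L[ℝ] ℂ) = fderiv ℝ g (z t) := by
      ext x
      rw [heqv_def, ContinuousLinearEquiv.coe_coe, ContinuousLinearEquiv.unitsEquiv_apply,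
        hunit.unit_spec]
    have heqvsymm : ∀ y : ℂ, eqv.symm y = (↑hunit.unit⁻¹ : ℂ →L[ℝ] ℂ) y := by
      intro y
      rw [ContinuousLinearEquiv.symm_apply_eq]
      have : eqv ((↑hunit.unit⁻¹ : ℂ →L[ℝ] ℂ) y)
          = (↑hunit.unit : ℂ →L[ℝ] ℂ) ((↑hunit.unit⁻¹ : ℂ →L[ℝ] ℂ) y) := by
        rw [heqv_def, ContinuousLinearEquiv.unitsEquiv_apply]
      rw [this, ← ContinuousLinearMap.mul_apply, hunit.unit.mul_inv,
        ContinuousLinearMap.one_apply]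
    have hcontψ : ContinuousAt Φ.symm (u t) :=
      Φ.symm.continuousAt (by simpa using (hball (huball t ht)).1)
    have hgd : HasFDerivAt g (eqv : ℂ →L[ℝ] ℂ) (Φ.symm (u t)) := by
      rw [heqv]
      exact hgdiff _ hzU
    have hev : ∀ᶠ y in nhds (u t), g (Φ.symm y) = y :=
      Filter.eventually_of_mem (Metric.isOpen_ball.mem_nhds (huball t ht)) hrightinv
    have hψd : HasFDerivAt Φ.symm ((eqv.symm : ℂ →L[ℝ] ℂ)) (u t) :=
      hgd.of_local_left_inverse hcontψ hev
    have hzd : HasDerivAt z (eqv.symm (-Real.exp (-t) • c)) t :=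
      hψd.comp_hasDerivAt t hu'
    have hval : eqv.symm (-Real.exp (-t) • c)
        = -(Ring.inverse (fderiv ℝ (gradient F₀) (z t)) (gradient F₀ (z t))) := by
      rw [hfdzt, hgradzt, hgzt]
      have h1 : fderiv ℝ g (z t) = ↑hunit.unit := hunit.unit_spec.symm
      rw [h1, Ring.inverse_unit]
      have h2 : -Real.exp (-t) • c = -(u t) := by
        rw [hu_def]; simp [neg_smul]
      rw [h2, map_neg, heqvsymm]
    rw [← hval]
    exact hzd.hasDerivWithinAt
  · -- convergence
    have hu0 : Tendsto u atTop (nhds 0) := by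
      have h1 : Tendsto (fun t : ℝ => Real.exp (-t)) atTop (nhds 0) :=
        Real.tendsto_exp_neg_atTop_nhds_zero
      simpa only [zero_smul] using h1.smul_const c
    have := hψc0.tendsto.comp hu0
    rwa [hψ0] at this
end
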